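/- In a left/right Cayley complex Cay²(A;G;B) satisfying the total-no-conjugacy condition (ga ≠ bg for all g ∈ G, a ∈ A, b ∈ B), the labelling maps are bijective: for each vertex g the map ι_g : A × B → S(g), (a,b) ↦ [a,g,b] is a bijection onto the set of squares containing g; for each left edge e = {g,ag} the map B → S(e), b ↦ [a,g,b] is a bijection onto the squares containing e; and symmetrically for right edges. -/

import Mathlib

open Finset

/-- The square `[a,g,b]` of the left/right Cayley complex, as the set of its four
(representative) triples. -/
def cSquare {G : Type*} [Group G] [DecidableEq G] (a g b : G) : Finset (G × G × G) :=
  {(a, g, b), (a⁻¹, a * g, b), (a⁻¹, a * g * b, b⁻¹), (a, g * b, b⁻¹)}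

/-- A square contains the left edge `⌊a,g⌋ = ⌊a⁻¹,ag⌋` if it has a representative rooted
at that edge. -/
def hasLeftEdge {G : Type*} [Group G] (a g : G) (s : Finset (G × G × G)) : Prop :=
  ∃ y : G, (a, g, y) ∈ s ∨ (a⁻¹, a * g, y) ∈ s

/-- A square contains the right edge `⌈g,b⌉ = ⌈gb,b⁻¹⌉` if it has a representative rooted
at that edge. -/
def hasRightEdge {G : Type*} [Group G] (g b : G) (s : Finset (G × G × G)) : Prop :=
  ∃ x : G, (x, g, b) ∈ s ∨ (x, g * b, b⁻¹) ∈ s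

section helpers
variable {G : Type*} [Group G] [DecidableEq G]

lemma self_mem_cSquare (a g b : G) : (a, g, b) ∈ cSquare a g b := by simp [cSquare]

lemma sq1 (a g b : G) : cSquare a⁻¹ (a * g) b = cSquare a g b := by
  ext t
  simp only [cSquare, mem_insert, mem_singleton, inv_inv, inv_mul_cancel_left, mul_assoc]
  tauto

lemma sq2 (a g b : G) : cSquare a⁻¹ (a * g * b) b⁻¹ = cSquare a g b := by
  ext t
  simp only [cSquare, mem_insert, mem_singleton, inv_inv, inv_mul_cancel_left,
    mul_inv_cancel_right, mul_assoc, mul_inv_cancel_left, mul_inv_cancel, mul_one]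
  tauto

lemma sq3 (a g b : G) : cSquare a (g * b) b⁻¹ = cSquare a g b := by
  ext t
  simp only [cSquare, mem_insert, mem_singleton, inv_inv, inv_mul_cancel_left,
    mul_inv_cancel_right, mul_assoc, mul_inv_cancel_left, mul_inv_cancel, mul_one]
  tauto

lemma noconj {A B : Finset G}
    (tnc : ∀ g : G, ∀ a ∈ A, ∀ b ∈ B, g * a ≠ b * g)
    (hBsym : ∀ b ∈ B, b⁻¹ ∈ B)
    {a b : G} (ha : a ∈ A) (hb : b ∈ B) (g : G) : g ≠ a * g * b := by
  intro h
  apply tnc g⁻¹ a ha b⁻¹ (hBsym b hb)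
  have h1 : a⁻¹ * g = g * b := by nth_rewrite 1 [h]; group
  simpa [mul_inv_rev] using congrArg Inv.inv h1

lemma inj_key {A B : Finset G}
    (tnc : ∀ g : G, ∀ a ∈ A, ∀ b ∈ B, g * a ≠ b * g)
    (hBsym : ∀ b ∈ B, b⁻¹ ∈ B)
    {a g b a' b' : G} (ha' : a' ∈ A) (hb' : b' ∈ B)
    (h : (a, g, b) ∈ cSquare a' g b') : a = a' ∧ b = b' := by
  simp only [cSquare, mem_insert, mem_singleton, Prod.mk.injEq] at h
  rcases h with ⟨h1, _, h3⟩ | ⟨h1, h2, h3⟩ | ⟨_, h2, _⟩ | ⟨h1, h2, h3⟩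
  · exact ⟨h1, h3⟩
  · have ha1 : a' = 1 := by
      have := h2.symm
      rwa [mul_eq_right] at this
    exact ⟨by simp [h1, ha1], h3⟩
  · exact absurd h2 (noconj tnc hBsym ha' hb' g)
  · have hb1 : b' = 1 := by
      have := h2.symm
      rwa [mul_eq_left] at this
    exact ⟨h1, by simp [h3, hb1]⟩

lemma repr_key {A B : Finset G}
    (hAsym : ∀ a ∈ A, a⁻¹ ∈ A) (hBsym : ∀ b ∈ B, b⁻¹ ∈ B)
    {x u y p g q : G} (hx : x ∈ A) (hy : y ∈ B)
    (h : (p, g, q) ∈ cSquare x u y) :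
    p ∈ A ∧ q ∈ B ∧ cSquare x u y = cSquare p g q := by
  simp only [cSquare, mem_insert, mem_singleton, Prod.mk.injEq] at h
  rcases h with ⟨h1, h2, h3⟩ | ⟨h1, h2, h3⟩ | ⟨h1, h2, h3⟩ | ⟨h1, h2, h3⟩
  · exact ⟨by rw [h1]; exact hx, by rw [h3]; exact hy, by rw [h1, h2, h3]⟩
  · exact ⟨by rw [h1]; exact hAsym x hx, by rw [h3]; exact hy, by rw [h1, h2, h3, sq1]⟩
  · exact ⟨by rw [h1]; exact hAsym x hx, by rw [h3]; exact hBsym y hy, by rw [h1, h2, h3, sq2]⟩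
  · exact ⟨by rw [h1]; exact hx, by rw [h3]; exact hBsym y hy, by rw [h1, h2, h3, sq3]⟩

end helpers

/-- **Bijectivity of the labelling maps under (TNC).** In a left/right Cayley complex
satisfying the total no-conjugacy condition, `ι_g : A × B → S(g)` is a bijection onto the
squares containing the vertex `g`, and for each left (resp. right) edge the labelling map
from `B` (resp. `A`) is a bijection onto the squares containing that edge. -/
theorem stmt6 {G : Type*} [Group G] [Fintype G] [DecidableEq G]
    (A B : Finset G)
    (hAsym : ∀ a ∈ A, a⁻¹ ∈ A) (hBsym : ∀ b ∈ B, b⁻¹ ∈ B)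
    (tnc : ∀ g : G, ∀ a ∈ A, ∀ b ∈ B, g * a ≠ b * g)
    (S : Finset (Finset (G × G × G)))
    (hS : S = (A ×ˢ (univ : Finset G) ×ˢ B).image fun t => cSquare t.1 t.2.1 t.2.2) :
    (∀ g : G, Set.BijOn (fun p : G × G => cSquare p.1 g p.2) ↑(A ×ˢ B)
      {s | s ∈ S ∧ g ∈ s.image fun t => t.2.1}) ∧
    (∀ a ∈ A, ∀ g : G, Set.BijOn (fun b : G => cSquare a g b) ↑B
      {s | s ∈ S ∧ hasLeftEdge a g s}) ∧
    (∀ b ∈ B, ∀ g : G, Set.BijOn (fun a : G => cSquare a g b) ↑A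
      {s | s ∈ S ∧ hasRightEdge g b s}) := by
  subst hS
  have hmemS : ∀ a ∈ A, ∀ b ∈ B, ∀ g : G,
      cSquare a g b ∈ (A ×ˢ (univ : Finset G) ×ˢ B).image
        (fun t : G × G × G => cSquare t.1 t.2.1 t.2.2) := by
    intro a ha b hb g
    exact mem_image.mpr ⟨(a, g, b), by simp [ha, hb], rfl⟩
  have hdecomp : ∀ s ∈ (A ×ˢ (univ : Finset G) ×ˢ B).image
      (fun t : G × G × G => cSquare t.1 t.2.1 t.2.2),
      ∃ x u y : G, x ∈ A ∧ y ∈ B ∧ s = cSquare x u y := by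
    intro s hs
    obtain ⟨⟨x, u, y⟩, ht, rfl⟩ := mem_image.mp hs
    simp only [mem_product, mem_univ, true_and] at ht
    exact ⟨x, u, y, ht.1, ht.2, rfl⟩
  refine ⟨?_, ?_, ?_⟩
  · -- vertex
    intro g
    refine ⟨?_, ?_, ?_⟩
    · rintro ⟨a, b⟩ hp
      simp only [Finset.coe_product, Set.mem_prod, mem_coe] at hp
      exact ⟨hmemS a hp.1 b hp.2 g,
        mem_image.mpr ⟨(a, g, b), self_mem_cSquare a g b, rfl⟩⟩
    · rintro ⟨a, b⟩ h1 ⟨a', b'⟩ h2 heq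
      simp only [Finset.coe_product, Set.mem_prod, mem_coe] at h1 h2
      have hm : (a, g, b) ∈ cSquare a' g b' := by
        have := self_mem_cSquare a g b
        rwa [show cSquare a g b = cSquare a' g b' from heq] at this
      obtain ⟨e1, e2⟩ := inj_key tnc hBsym h2.1 h2.2 hm
      exact Prod.ext e1 e2
    · rintro s ⟨hsS, hg⟩
      obtain ⟨x, u, y, hx, hy, rfl⟩ := hdecomp s hsS
      obtain ⟨⟨p, g', q⟩, ht, hg'⟩ := mem_image.mp hg
      simp only at hg'
      subst hg'
      obtain ⟨hp, hq, heq⟩ := repr_key hAsym hBsym hx hy ht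
      exact ⟨(p, q), by simp [Finset.coe_product, hp, hq], heq.symm⟩
  · -- left edges
    intro a ha g
    refine ⟨?_, ?_, ?_⟩
    · intro b hb
      exact ⟨hmemS a ha b (mem_coe.mp hb) g, b, Or.inl (self_mem_cSquare a g b)⟩
    · intro b hb b' hb' heq
      have hm : (a, g, b) ∈ cSquare a g b' := by
        have := self_mem_cSquare a g b
        rwa [show cSquare a g b = cSquare a g b' from heq] at this
      exact (inj_key tnc hBsym ha (mem_coe.mp hb') hm).2
    · rintro s ⟨hsS, z, hz⟩
      obtain ⟨x, u, y, hx, hy, rfl⟩ := hdecomp s hsS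
      rcases hz with hz | hz
      · obtain ⟨hp, hq, heq⟩ := repr_key hAsym hBsym hx hy hz
        exact ⟨z, hq, heq.symm⟩
      · obtain ⟨hp, hq, heq⟩ := repr_key hAsym hBsym hx hy hz
        exact ⟨z, hq, (heq.trans (sq1 a g z)).symm⟩
  · -- right edges
    intro b hb g
    refine ⟨?_, ?_, ?_⟩
    · intro a ha
      exact ⟨hmemS a (mem_coe.mp ha) b hb g, a, Or.inl (self_mem_cSquare a g b)⟩
    · intro a ha a' ha' heq
      have hm : (a, g, b) ∈ cSquare a' g b := by
        have := self_mem_cSquare a g b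
        rwa [show cSquare a g b = cSquare a' g b from heq] at this
      exact (inj_key tnc hBsym (mem_coe.mp ha') hb hm).1
    · rintro s ⟨hsS, z, hz⟩
      obtain ⟨x, u, y, hx, hy, rfl⟩ := hdecomp s hsS
      rcases hz with hz | hz
      · obtain ⟨hp, hq, heq⟩ := repr_key hAsym hBsym hx hy hz
        exact ⟨z, hp, heq.symm⟩
      · obtain ⟨hp, hq, heq⟩ := repr_key hAsym hBsym hx hy hz
        exact ⟨z, hp, (heq.trans (sq3 z g b)).symm⟩
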